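/- Let $k$ be an algebraically closed field of characteristic zero, let $s \geq 1$, $t \geq 1$ and $u \geq 0$ be integers, and let $c_1, c_2 \in k \setminus \{0\}$. Then the $k$-derivation $\bar{d} = \partial_x + x^u(c_1 x^t + c_2 y^s)\partial_y$ of $k[x,y]$ is simple if and only if the $k$-derivation $d = \partial_x + x^u(x^t + y^s)\partial_y$ of $k[x,y]$ is simple. -/

import Mathlib

open MvPolynomial

/-- A `k`-derivation `d` of `k[x,y]` is *simple* if the only `d`-differential ideals
(ideals `I` with `d(I) ⊆ I`) are `(0)` and the whole ring. Here `k[x,y]` is modelled as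
`MvPolynomial (Fin 2) k`, with `x = X 0` and `y = X 1`. -/
def IsSimpleDerivation {k : Type*} [CommRing k]
    (d : Derivation k (MvPolynomial (Fin 2) k) (MvPolynomial (Fin 2) k)) : Prop :=
  ∀ I : Ideal (MvPolynomial (Fin 2) k), (∀ f ∈ I, d f ∈ I) → I = ⊥ ∨ I = ⊤

section Aux

variable {k : Type*} [CommRing k]

/-- Conjugation of a derivation by an algebra automorphism. -/
noncomputable def conjDer (σ : MvPolynomial (Fin 2) k ≃ₐ[k] MvPolynomial (Fin 2) k)
    (d : Derivation k (MvPolynomial (Fin 2) k) (MvPolynomial (Fin 2) k)) :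
    Derivation k (MvPolynomial (Fin 2) k) (MvPolynomial (Fin 2) k) where
  toLinearMap := σ.symm.toLinearMap ∘ₗ d.toLinearMap ∘ₗ σ.toLinearMap
  map_one_eq_zero' := by simp
  leibniz' a b := by
    simp only [LinearMap.coe_comp, Function.comp_apply, AlgEquiv.toLinearMap_apply,
      map_mul, Derivation.leibniz, smul_eq_mul, map_add, AlgEquiv.symm_apply_apply,
      Derivation.coeFn_coe]

lemma conjDer_apply (σ : MvPolynomial (Fin 2) k ≃ₐ[k] MvPolynomial (Fin 2) k)
    (d : Derivation k (MvPolynomial (Fin 2) k) (MvPolynomial (Fin 2) k))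
    (f : MvPolynomial (Fin 2) k) :
    conjDer σ d f = σ.symm (d (σ f)) := rfl

lemma simple_of_conj (σ : MvPolynomial (Fin 2) k ≃ₐ[k] MvPolynomial (Fin 2) k)
    (d d' : Derivation k (MvPolynomial (Fin 2) k) (MvPolynomial (Fin 2) k))
    (h : ∀ f, d (σ f) = σ (d' f)) :
    IsSimpleDerivation d → IsSimpleDerivation d' := by
  intro hd I hI
  set J : Ideal (MvPolynomial (Fin 2) k) :=
    Ideal.comap (σ.symm : MvPolynomial (Fin 2) k →+* MvPolynomial (Fin 2) k) I with hJ
  have hJd : ∀ g ∈ J, d g ∈ J := by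
    intro g hg
    have h2 := h (σ.symm g)
    rw [σ.apply_symm_apply] at h2
    show σ.symm (d g) ∈ I
    rw [h2, σ.symm_apply_apply]
    exact hI _ hg
  have hIJ : I = Ideal.comap (σ : MvPolynomial (Fin 2) k →+* MvPolynomial (Fin 2) k) J := by
    ext g
    simp [hJ, Ideal.mem_comap, σ.symm_apply_apply]
  rcases hd J hJd with h0 | h1
  · left
    rw [hIJ, h0]
    ext g
    simp [Ideal.mem_comap]
  · right
    rw [hIJ, h1]
    simp

end Aux

section Smul

variable {k : Type*} [Field k]

lemma simple_smul_iff (α : k) (hα : α ≠ 0)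
    (d : Derivation k (MvPolynomial (Fin 2) k) (MvPolynomial (Fin 2) k)) :
    IsSimpleDerivation (α • d) ↔ IsSimpleDerivation d := by
  constructor
  · intro hd I hI
    apply hd I
    intro f hf
    have : (α • d) f = C α * d f := by
      rw [Derivation.smul_apply, smul_eq_C_mul]
    rw [this]
    exact I.mul_mem_left _ (hI f hf)
  · intro hd I hI
    apply hd I
    intro f hf
    have h1 : (α • d) f ∈ I := hI f hf
    have h2 : (α • d) f = C α * d f := by
      rw [Derivation.smul_apply, smul_eq_C_mul]
    have : d f = C α⁻¹ * ((α • d) f) := by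
      rw [h2, ← mul_assoc, ← C_mul, inv_mul_cancel₀ hα, C_1, one_mul]
    rw [this]
    exact I.mul_mem_left _ h1

end Smul

theorem simple_derivation_normalization_xt_ys
    (k : Type*) [Field k] [CharZero k] [IsAlgClosed k]
    (s t u : ℕ) (hs : 1 ≤ s) (ht : 1 ≤ t)
    (c₁ c₂ : k) (hc₁ : c₁ ≠ 0) (hc₂ : c₂ ≠ 0) :
    IsSimpleDerivation
      (MvPolynomial.mkDerivation k
        ![1, X 0 ^ u * (C c₁ * X 0 ^ t + C c₂ * X 1 ^ s)]) ↔
    IsSimpleDerivation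
      (MvPolynomial.mkDerivation k
        ![1, X 0 ^ u * (X 0 ^ t + X 1 ^ s)]) := by
  obtain ⟨s', rfl⟩ : ∃ s', s = s' + 1 := ⟨s - 1, (Nat.succ_pred_eq_of_pos hs).symm⟩
  -- choose α with α ^ m = c₂ * c₁ ^ s'
  have hm : 0 < u + 1 + s' * (u + t + 1) := by positivity
  obtain ⟨α, hαm⟩ := IsAlgClosed.exists_pow_nat_eq (c₂ * c₁ ^ s') hm
  have hα : α ≠ 0 := by
    rintro rfl
    rw [zero_pow hm.ne'] at hαm
    exact (mul_ne_zero hc₂ (pow_ne_zero _ hc₁)) hαm.symm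
  set β : k := α ^ (u + t + 1) / c₁ with hβdef
  have hβ : β ≠ 0 := div_ne_zero (pow_ne_zero _ hα) hc₁
  have hb1 : c₁ * β = α ^ (u + t + 1) := by
    rw [hβdef]; field_simp
  have hb2 : c₂ * β = α ^ (u + 1) * β ^ (s' + 1) := by
    rw [hβdef, div_pow, ← pow_mul]
    field_simp
    linear_combination (-(c₁ * α ^ (u + t + 1))) * hαm
  have hk1 : β * α⁻¹ ^ u * c₁ * α⁻¹ ^ t = α := by
    calc β * α⁻¹ ^ u * c₁ * α⁻¹ ^ t = (c₁ * β) * (α ^ u)⁻¹ * (α ^ t)⁻¹ := by ring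
      _ = α := by rw [hb1, pow_succ, pow_add]; field_simp
  have hk2 : β * α⁻¹ ^ u * c₂ * β⁻¹ ^ (s' + 1) = α := by
    calc β * α⁻¹ ^ u * c₂ * β⁻¹ ^ (s' + 1) = (c₂ * β) * (α ^ u)⁻¹ * (β ^ (s' + 1))⁻¹ := by ring
      _ = α := by rw [hb2, pow_succ]; field_simp
  -- the scaling automorphism
  have hcomp1 : (aeval (R := k) ![C α * X 0, C β * X 1]).comp
      (aeval ![C α⁻¹ * X 0, C β⁻¹ * X 1]) = AlgHom.id k (MvPolynomial (Fin 2) k) := by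
    apply MvPolynomial.algHom_ext
    intro i
    fin_cases i <;>
      simp [← mul_assoc, ← C_mul, mul_inv_cancel₀ hα, mul_inv_cancel₀ hβ, inv_mul_cancel₀ hα,
        inv_mul_cancel₀ hβ]
  have hcomp2 : (aeval (R := k) ![C α⁻¹ * X 0, C β⁻¹ * X 1]).comp
      (aeval ![C α * X 0, C β * X 1]) = AlgHom.id k (MvPolynomial (Fin 2) k) := by
    apply MvPolynomial.algHom_ext
    intro i
    fin_cases i <;>
      simp [← mul_assoc, ← C_mul, mul_inv_cancel₀ hα, mul_inv_cancel₀ hβ, inv_mul_cancel₀ hα,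
        inv_mul_cancel₀ hβ]
  set σ : MvPolynomial (Fin 2) k ≃ₐ[k] MvPolynomial (Fin 2) k :=
    AlgEquiv.ofAlgHom (aeval ![C α * X 0, C β * X 1]) (aeval ![C α⁻¹ * X 0, C β⁻¹ * X 1])
      hcomp1 hcomp2 with hσdef
  set dbar : Derivation k (MvPolynomial (Fin 2) k) (MvPolynomial (Fin 2) k) :=
    MvPolynomial.mkDerivation k ![1, X 0 ^ u * (C c₁ * X 0 ^ t + C c₂ * X 1 ^ (s' + 1))]
    with hdbar
  set d : Derivation k (MvPolynomial (Fin 2) k) (MvPolynomial (Fin 2) k) :=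
    MvPolynomial.mkDerivation k ![1, X 0 ^ u * (X 0 ^ t + X 1 ^ (s' + 1))] with hd
  have hσX0 : σ (X 0) = C α * X 0 := by simp [hσdef]
  have hσX1 : σ (X 1) = C β * X 1 := by simp [hσdef]
  have hσsymmX0 : σ.symm (X 0) = C α⁻¹ * X 0 := by simp [hσdef]
  have hσsymmX1 : σ.symm (X 1) = C β⁻¹ * X 1 := by simp [hσdef]
  have hE : conjDer σ dbar = α • d := by
    apply MvPolynomial.derivation_ext
    intro i
    fin_cases i
    · show conjDer σ dbar (X 0) = (α • d) (X 0)
      rw [conjDer_apply, hσX0, ← smul_eq_C_mul, Derivation.map_smul, map_smul,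
        Derivation.smul_apply]
      rw [hdbar, hd]
      simp [MvPolynomial.mkDerivation_X]
    · show conjDer σ dbar (X 1) = (α • d) (X 1)
      rw [conjDer_apply, hσX1, ← smul_eq_C_mul, Derivation.map_smul, map_smul,
        Derivation.smul_apply]
      rw [hdbar, hd]
      simp only [MvPolynomial.mkDerivation_X, Matrix.cons_val_one, Matrix.head_cons,
        Matrix.cons_val_zero]
      rw [smul_eq_C_mul, smul_eq_C_mul]
      simp only [map_mul, map_add, map_pow, hσsymmX0, hσsymmX1, map_ofNat]
      have K1 : (C β : MvPolynomial (Fin 2) k) * (C α⁻¹) ^ u * C c₁ * (C α⁻¹) ^ t = C α := by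
        rw [← C_pow, ← C_pow, ← C_mul, ← C_mul, ← C_mul, hk1]
      have K2 : (C β : MvPolynomial (Fin 2) k) * (C α⁻¹) ^ u * C c₂ * (C β⁻¹) ^ (s' + 1) = C α := by
        rw [← C_pow, ← C_pow, ← C_mul, ← C_mul, ← C_mul, hk2]
      have hC : σ.symm (C c₁) = C c₁ ∧ σ.symm (C c₂) = C c₂ := ⟨σ.symm.commutes' c₁, σ.symm.commutes' c₂⟩
      rw [hC.1, hC.2]
      linear_combination (X (R := k) 0 ^ (u + t)) * K1 + (X (R := k) 0 ^ u * X 1 ^ (s' + 1)) * K2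
  have hrel : ∀ f, dbar (σ f) = σ ((α • d) f) := by
    intro f
    have := DFunLike.congr_fun hE f
    rw [conjDer_apply] at this
    rw [← this, σ.apply_symm_apply]
  have hrel2 : ∀ f, (α • d) (σ.symm f) = σ.symm (dbar f) := by
    intro f
    have := hrel (σ.symm f)
    rw [σ.apply_symm_apply] at this
    rw [this, σ.symm_apply_apply]
  constructor
  · intro h
    exact (simple_smul_iff α hα d).mp (simple_of_conj σ dbar (α • d) hrel h)
  · intro h
    exact simple_of_conj σ.symm (α • d) dbar hrel2 ((simple_smul_iff α hα d).mpr h)
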